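/- Let M = (a_{ij})_{i,j=0}^{2} be a complex 3×3 matrix such that ⟨φ_s|(M ⊗ I₃)|φ_t⟩ = 0 for all s ≠ t, where |φ_1⟩,...,|φ_8⟩ are the 8 states |0⟩⊗(|0⟩±|1⟩), (|0⟩±|1⟩)⊗|2⟩, |2⟩⊗(|1⟩±|2⟩), (|1⟩±|2⟩)⊗|0⟩ in ℂ^3 ⊗ ℂ^3. Then M is a scalar multiple of the 3×3 identity matrix. -/

import Mathlib

/-- basis vector |k⟩ of ℂ³ -/
def ket3 (k : ℕ) : Fin 3 → ℂ := fun i => if (i : ℕ) = k then 1 else 0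

/-- |k⟩ ± |l⟩ in ℂ³ (`s = true` is `+`, `s = false` is `-`) -/
def pm3 (k l : ℕ) (s : Bool) : Fin 3 → ℂ :=
  fun i => (if (i : ℕ) = k then 1 else 0) + (if s then 1 else -1) * (if (i : ℕ) = l then 1 else 0)

/-- product state a ⊗ b in ℂ³ ⊗ ℂ³ -/
def prod33 (a b : Fin 3 → ℂ) : Fin 3 × Fin 3 → ℂ := fun p => a p.1 * b p.2

/-- the 8 states of Eqs. (31) -/
def phi8 (k : Fin 8) : Fin 3 × Fin 3 → ℂ :=
  match (k : ℕ) / 2, ((k : ℕ) % 2 = 0 : Bool) with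
  | 0, s => prod33 (ket3 0) (pm3 0 1 s)
  | 1, s => prod33 (pm3 0 1 s) (ket3 2)
  | 2, s => prod33 (ket3 2) (pm3 1 2 s)
  | _, s => prod33 (pm3 1 2 s) (ket3 0)

/-- (M ⊗ I₃) applied to a vector of ℂ³ ⊗ ℂ³ -/
noncomputable def applyMI3 (M : Matrix (Fin 3) (Fin 3) ℂ) (x : Fin 3 × Fin 3 → ℂ) :
    Fin 3 × Fin 3 → ℂ :=
  fun p => ∑ k : Fin 3, M p.1 k * x (k, p.2)

theorem povm_trivial_dim3 (M : Matrix (Fin 3) (Fin 3) ℂ)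
    (horth : ∀ s t : Fin 8, s ≠ t →
      ∑ p : Fin 3 × Fin 3, (starRingEnd ℂ) (phi8 s p) * applyMI3 M (phi8 t) p = 0) :
    ∃ c : ℂ, M = c • (1 : Matrix (Fin 3) (Fin 3) ℂ) := by
  have e1 := horth 0 4 (by decide)
  have e2 := horth 0 6 (by decide)
  have e3 := horth 2 3 (by decide)
  have e4 := horth 2 4 (by decide)
  have e5 := horth 3 2 (by decide)
  have e6 := horth 4 0 (by decide)
  have e7 := horth 4 2 (by decide)
  have e8 := horth 6 7 (by decide)
  simp only [phi8, prod33, ket3, pm3, applyMI3, Fintype.sum_prod_type,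
    Fin.sum_univ_three, Fin.isValue, Fin.val_zero, Fin.val_one, Fin.val_two,
    map_add, map_mul, map_one, map_neg, map_zero] at e1 e2 e3 e4 e5 e6 e7 e8
  simp only [show ((3:Fin 8):ℕ)=3 from rfl, show ((4:Fin 8):ℕ)=4 from rfl,
    show ((6:Fin 8):ℕ)=6 from rfl, show ((7:Fin 8):ℕ)=7 from rfl] at e1 e2 e3 e4 e5 e6 e7 e8
  norm_num at e1 e2 e3 e4 e5 e6 e7 e8
  simp only [prod33, ket3, pm3, Fin.isValue, map_add, map_mul, map_one, map_neg, map_zero] at e1 e2 e3 e4 e5 e6 e7 e8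
  norm_num at e1 e2 e3 e4 e5 e6 e7 e8
  refine ⟨M 0 0, ?_⟩
  ext i j
  fin_cases i <;> fin_cases j <;>
    simp [Matrix.one_apply] <;>
    first
      | linear_combination e1
      | linear_combination e2 - e1
      | linear_combination e4 - e1
      | linear_combination e6
      | linear_combination e7 - e6
      | linear_combination (e3 - e5) / 2 + e2 - e1
      | linear_combination (e3 + e5) / 2
      | linear_combination -(e3 + e5) / 2
      | linear_combination -(e3 + e5) / 2 - e8 - (e4 - e1) + (e7 - e6)
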